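/- The minimum of ‖Xb‖₂² over {b : ‖b_S‖₁ − ‖b_{−S}‖₁ = 1} equals the minimum of ‖Xb‖₂² over {b : ‖b_S‖₁ − ‖b_{−S}‖₁ ≥ 1}, and both equal the minimum over all sign vectors z_S ∈ {±1}^{|S|} of the convex problems min{ ‖Xb‖₂² : z_S^T b_S − ‖b_{−S}‖₁ ≥ 1, z_j b_j ≥ 0 for all j ∈ S }. -/
import Mathlib


open Finset

noncomputable def l1 {p : ℕ} (b : Fin p → ℝ) : ℝ := ∑ j, |b j|

def restr {p : ℕ} (S : Finset (Fin p)) (b : Fin p → ℝ) : Fin p → ℝ :=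
  fun j => if j ∈ S then b j else 0

noncomputable def qf {n p : ℕ} (X : Matrix (Fin n) (Fin p) ℝ) (b : Fin p → ℝ) : ℝ :=
  ∑ i, (X.mulVec b i) ^ 2

/-- The compatibility constant κ̂(v,S) (square root of the minimal value). -/
noncomputable def kappaHat {n p : ℕ} (X : Matrix (Fin n) (Fin p) ℝ) (S : Finset (Fin p))
    (v : ℝ) : ℝ :=
  Real.sqrt (sInf {c : ℝ | ∃ b : Fin p → ℝ,
    l1 (restr S b) - v * l1 (restr Sᶜ b) = 1 ∧ c = (S.card : ℝ) * qf X b / n})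

lemma l1_restr {p : ℕ} (S : Finset (Fin p)) (b : Fin p → ℝ) :
    l1 (restr S b) = ∑ j ∈ S, |b j| := by
  simp [l1, restr, apply_ite abs, Finset.sum_ite_mem]

lemma l1_restr_smul {p : ℕ} (S : Finset (Fin p)) (b : Fin p → ℝ) (t : ℝ) (ht : 0 ≤ t) :
    l1 (restr S (fun j => t * b j)) = t * l1 (restr S b) := by
  rw [l1_restr, l1_restr, Finset.mul_sum]
  refine Finset.sum_congr rfl fun j _ => ?_
  rw [abs_mul, abs_of_nonneg ht]

lemma qf_smul {n p : ℕ} (X : Matrix (Fin n) (Fin p) ℝ) (b : Fin p → ℝ) (t : ℝ) :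
    qf X (fun j => t * b j) = t ^ 2 * qf X b := by
  have h : (fun j => t * b j) = t • b := rfl
  rw [qf, qf, Finset.mul_sum]
  refine Finset.sum_congr rfl fun i _ => ?_
  rw [h, Matrix.mulVec_smul]
  simp [mul_pow]

lemma qf_nonneg {n p : ℕ} (X : Matrix (Fin n) (Fin p) ℝ) (b : Fin p → ℝ) :
    0 ≤ qf X b := Finset.sum_nonneg fun i _ => sq_nonneg _

theorem stmt3 {n p : ℕ} (X : Matrix (Fin n) (Fin p) ℝ) (S : Finset (Fin p)) :
    sInf {c : ℝ | ∃ b : Fin p → ℝ,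
        l1 (restr S b) - l1 (restr Sᶜ b) = 1 ∧ c = qf X b} =
    sInf {c : ℝ | ∃ b : Fin p → ℝ,
        l1 (restr S b) - l1 (restr Sᶜ b) ≥ 1 ∧ c = qf X b} ∧
    sInf {c : ℝ | ∃ b : Fin p → ℝ,
        l1 (restr S b) - l1 (restr Sᶜ b) ≥ 1 ∧ c = qf X b} =
    sInf {c : ℝ | ∃ z b : Fin p → ℝ,
        (∀ j ∈ S, z j = 1 ∨ z j = -1) ∧
        (∑ j ∈ S, z j * b j) - l1 (restr Sᶜ b) ≥ 1 ∧
        (∀ j ∈ S, 0 ≤ z j * b j) ∧ c = qf X b} := by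
  set A := {c : ℝ | ∃ b : Fin p → ℝ,
      l1 (restr S b) - l1 (restr Sᶜ b) = 1 ∧ c = qf X b} with hA
  set B := {c : ℝ | ∃ b : Fin p → ℝ,
      l1 (restr S b) - l1 (restr Sᶜ b) ≥ 1 ∧ c = qf X b} with hB
  have hAB : A ⊆ B := fun c ⟨b, h1, h2⟩ => ⟨b, le_of_eq h1.symm, h2⟩
  have hAbb : BddBelow A := ⟨0, fun c ⟨b, _, h2⟩ => h2 ▸ qf_nonneg X b⟩
  have hBbb : BddBelow B := ⟨0, fun c ⟨b, _, h2⟩ => h2 ▸ qf_nonneg X b⟩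
  constructor
  · rcases Set.eq_empty_or_nonempty B with hBe | hBne
    · have hAe : A = ∅ := Set.eq_empty_iff_forall_notMem.mpr fun c hc =>
        (Set.notMem_empty c) (hBe ▸ hAB hc)
      rw [hAe, hBe]
    · -- B nonempty; build element of A by scaling
      have key : ∀ c ∈ B, ∃ c' ∈ A, c' ≤ c := by
        rintro c ⟨b, h1, rfl⟩
        set t := l1 (restr S b) - l1 (restr Sᶜ b) with htdef
        have ht1 : (1 : ℝ) ≤ t := h1
        have ht0 : 0 < t := lt_of_lt_of_le one_pos ht1
        refine ⟨qf X (fun j => t⁻¹ * b j), ⟨fun j => t⁻¹ * b j, ?_, rfl⟩, ?_⟩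
        · rw [l1_restr_smul _ _ _ (inv_nonneg.mpr ht0.le),
            l1_restr_smul _ _ _ (inv_nonneg.mpr ht0.le), ← mul_sub, ← htdef,
            inv_mul_cancel₀ ht0.ne']
        · rw [qf_smul]
          have h2 : t⁻¹ ^ 2 ≤ 1 := by
            have : t⁻¹ ≤ 1 := inv_le_one_of_one_le₀ ht1
            nlinarith [inv_nonneg.mpr ht0.le]
          nlinarith [qf_nonneg X b]
      have hAne : A.Nonempty := by
        obtain ⟨c, hc⟩ := hBne
        obtain ⟨c', hc', _⟩ := key c hc
        exact ⟨c', hc'⟩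
      apply le_antisymm
      · exact le_csInf hBne fun c hc => by
          obtain ⟨c', hc', hle⟩ := key c hc
          exact le_trans (csInf_le hAbb hc') hle
      · exact csInf_le_csInf hBbb hAne hAB
  · congr 1
    ext c
    constructor
    · rintro ⟨b, h1, rfl⟩
      refine ⟨fun j => if 0 ≤ b j then 1 else -1, b, fun j _ => by by_cases h : 0 ≤ b j <;> simp [h], ?_, ?_, rfl⟩
      · have : (∑ j ∈ S, (if 0 ≤ b j then (1:ℝ) else -1) * b j) = ∑ j ∈ S, |b j| := by
          refine Finset.sum_congr rfl fun j _ => ?_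
          by_cases h : 0 ≤ b j
          · rw [if_pos h, one_mul, abs_of_nonneg h]
          · rw [if_neg h, neg_one_mul, abs_of_neg (lt_of_not_ge h)]
        rw [this, ← l1_restr]; exact h1
      · intro j _
        simp only
        by_cases h : 0 ≤ b j
        · rw [if_pos h, one_mul]; exact h
        · rw [if_neg h, neg_one_mul]
          exact neg_nonneg.mpr (le_of_lt (lt_of_not_ge h))
    · rintro ⟨z, b, hz, h1, hpos, rfl⟩
      refine ⟨b, ?_, rfl⟩
      have : (∑ j ∈ S, z j * b j) ≤ ∑ j ∈ S, |b j| := by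
        refine Finset.sum_le_sum fun j hj => ?_
        calc z j * b j ≤ |z j * b j| := le_abs_self _
          _ = |b j| := by rcases hz j hj with h | h <;> simp [h, abs_mul]
      rw [l1_restr]
      linarith
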